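/- Integral fluctuation theorem for the undephased engine: with H₁ = Σ_n ν_n Π_n the spectral decomposition of H₁ into rank-one orthogonal projectors Π_n = |n⟩₁⟨n|₁ onto an orthonormal eigenbasis, ρ₁ = exp(−βH₁)/Tr[exp(−βH₁)], U and V unitary and Φ a unital quantum channel, one has Σ_{n,l} e^{β(ν_n − ν_l)} Tr[Π_l V Φ(U Π_n ρ₁ U†) V†] = 1, i.e. ⟨e^{−Σ}⟩ = 1 for the stochastic entropy production Σ = −β(ν_n^{(1)} − ν_l^{(1)}). -/

import Mathlib

open Matrix

/-- Integral fluctuation theorem for the undephased engine: with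
`H₁ = ∑ n, ν n • Pr n` the spectral decomposition of `H₁` into rank-one orthogonal projectors
`Pr n = |e n⟩⟨e n|` onto an orthonormal eigenbasis, `ρ₁ = exp (−β H₁) / Tr (exp (−β H₁))` the
Gibbs state, `U` and `V` unitary and `Φ` a unital quantum channel, one has
`∑ n l, e^{β (ν n − ν l)} Tr[Pr l * V * Φ (U * Pr n * ρ₁ * Uᴴ) * Vᴴ] = 1`,
i.e. `⟨e^{−Σ}⟩ = 1` for the stochastic entropy production `Σ = −β (ν_n − ν_l)`. -/
theorem undephased_integral_fluctuation_theorem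
    {d : ℕ} (hd : 1 ≤ d) (β : ℝ)
    (H₁ : Matrix (Fin d) (Fin d) ℂ)
    (e : Fin d → (Fin d → ℂ))
    (he : ∀ n n', star (e n) ⬝ᵥ e n' = if n = n' then 1 else 0)
    (ν : Fin d → ℝ)
    (Pr : Fin d → Matrix (Fin d) (Fin d) ℂ)
    (hPr : ∀ n, Pr n = vecMulVec (e n) (star (e n)))
    (hspec : H₁ = ∑ n, (ν n : ℂ) • Pr n)
    (ρ₁ : Matrix (Fin d) (Fin d) ℂ)
    (hρ₁ : ρ₁ = ((NormedSpace.exp (-(β : ℂ) • H₁)).trace)⁻¹ •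
        NormedSpace.exp (-(β : ℂ) • H₁))
    (U V : Matrix (Fin d) (Fin d) ℂ)
    (hU : Uᴴ * U = 1) (hU' : U * Uᴴ = 1)
    (hV : Vᴴ * V = 1) (hV' : V * Vᴴ = 1)
    {K : ℕ} (Kr : Fin K → Matrix (Fin d) (Fin d) ℂ)
    (hKr : ∑ k, (Kr k)ᴴ * Kr k = 1) (hKr' : ∑ k, Kr k * (Kr k)ᴴ = 1)
    (Φ : Matrix (Fin d) (Fin d) ℂ → Matrix (Fin d) (Fin d) ℂ)
    (hΦ : ∀ X, Φ X = ∑ k, Kr k * X * (Kr k)ᴴ) :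
    ∑ n, ∑ l, (Real.exp (β * (ν n - ν l)) : ℂ) *
        (Pr l * V * Φ (U * Pr n * ρ₁ * Uᴴ) * Vᴴ).trace = 1 := by
  classical
  -- the unitary of eigenvectors
  set P : Matrix (Fin d) (Fin d) ℂ := Matrix.of (fun i j => e j i) with hPdef
  have hPP : Pᴴ * P = 1 := by
    ext i j
    simpa [Matrix.mul_apply, Matrix.one_apply, Matrix.conjTranspose_apply, hPdef,
      dotProduct, mul_comm] using he i j
  have hPP' : P * Pᴴ = 1 := by
    rwa [mul_eq_one_comm] at hPP
  -- conjugation by P of a diagonal matrix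
  have hconj : ∀ f : Fin d → ℂ, P * Matrix.diagonal f * Pᴴ = ∑ n, f n • Pr n := by
    intro f
    ext i j
    simp [Matrix.mul_apply, Matrix.diagonal, Matrix.conjTranspose_apply, hPdef, hPr,
      Matrix.sum_apply, Matrix.vecMulVec_apply, Finset.sum_ite_eq, mul_comm, mul_left_comm,
      mul_assoc]
  -- the exponential
  have hexp : NormedSpace.exp (-(β : ℂ) • H₁)
      = ∑ n, (Real.exp (-(β * ν n)) : ℂ) • Pr n := by
    have h1 : -(β : ℂ) • H₁ = P * Matrix.diagonal (fun n => (-(β * ν n) : ℂ)) * Pᴴ := by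
      rw [hconj, hspec, Finset.smul_sum]
      congr 1; ext n
      rw [smul_smul]
      push_cast
      ring_nf
    have hPinv : P⁻¹ = Pᴴ := Matrix.inv_eq_right_inv hPP'
    have hunit : IsUnit P := Matrix.isUnit_iff_isUnit_det P |>.mpr
      (by
        have := Matrix.det_mul P Pᴴ
        rw [hPP', Matrix.det_one] at this
        exact IsUnit.of_mul_eq_one _ this.symm)
    rw [h1, ← hPinv, Matrix.exp_conj P (Matrix.diagonal fun n => (-(β * ν n) : ℂ)) hunit, Matrix.exp_diagonal, hPinv, hconj]
    refine Finset.sum_congr rfl fun n _ => ?_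
    congr 1
    rw [Pi.coe_exp, ← Complex.exp_eq_exp_ℂ]
    norm_cast
  -- basic projector algebra
  have hPrmul : ∀ n m, Pr n * Pr m = if n = m then Pr n else 0 := by
    intro n m
    have hdot := he n m
    simp only [dotProduct, Pi.star_apply, RCLike.star_def] at hdot
    ext i j
    rw [hPr, hPr, Matrix.mul_apply]
    simp only [Matrix.vecMulVec_apply, Pi.star_apply, RCLike.star_def]
    have hre : ∀ x, e n i * (starRingEnd ℂ) (e n x) * (e m x * (starRingEnd ℂ) (e m j))
        = ((starRingEnd ℂ) (e n x) * e m x) * (e n i * (starRingEnd ℂ) (e m j)) :=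
      fun x => by ring
    rw [Finset.sum_congr rfl fun x _ => hre x, ← Finset.sum_mul, hdot]
    by_cases h : n = m <;>
      simp [h, hPr, Matrix.vecMulVec_apply]
  have hPrsum : ∑ n, Pr n = 1 := by
    have := hconj (fun _ => 1)
    simpa [hPP'] using this.symm
  have hPrtr : ∀ n, (Pr n).trace = 1 := by
    intro n
    have hdot := he n n
    simp only [if_pos rfl, dotProduct, Pi.star_apply, RCLike.star_def] at hdot
    rw [hPr, Matrix.trace]
    simpa [Matrix.diag, Matrix.vecMulVec_apply, mul_comm] using hdot
  -- partition function
  set c : Fin d → ℂ := fun n => (Real.exp (-(β * ν n)) : ℂ) with hc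
  set Z : ℂ := (NormedSpace.exp (-(β : ℂ) • H₁)).trace with hZ
  have hZval : Z = ∑ n, c n := by
    rw [hZ, hexp, Matrix.trace_sum]
    congr 1; ext n
    rw [Matrix.trace_smul, hPrtr, smul_eq_mul, mul_one]
  have hZreal : ∑ n, Real.exp (-(β * ν n)) > 0 :=
    Finset.sum_pos (fun i _ => Real.exp_pos _)
      (Finset.univ_nonempty_iff.mpr ⟨⟨0, hd⟩⟩)
  have hZne : Z ≠ 0 := by
    rw [hZval]
    have : (∑ n, c n) = ((∑ n, Real.exp (-(β * ν n)) : ℝ) : ℂ) := by push_cast [hc]; rfl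
    rw [this]
    exact_mod_cast hZreal.ne'
  -- Pr n * ρ₁
  have hPrρ : ∀ n, Pr n * ρ₁ = (Z⁻¹ * c n) • Pr n := by
    intro n
    rw [hρ₁, Matrix.mul_smul, hexp, Finset.mul_sum]
    simp only [Matrix.mul_smul, hPrmul]
    have hite : ∀ m : Fin d, (Real.exp (-(β * ν m)) : ℂ) • (if n = m then Pr n else 0)
        = if n = m then c n • Pr n else 0 := by
      intro m
      by_cases h : n = m
      · subst h; simp [hc]
      · simp [h]
    rw [Finset.sum_congr rfl fun m _ => hite m,
      Finset.sum_ite_eq Finset.univ n (fun _ => c n • Pr n)]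
    simp [smul_smul, mul_comm]
  -- linearity of Φ
  have hΦsmul : ∀ (a : ℂ) X, Φ (a • X) = a • Φ X := by
    intro a X
    simp [hΦ, Finset.smul_sum, Matrix.mul_smul, Matrix.smul_mul]
  have hΦsum : ∀ (X : Fin d → Matrix (Fin d) (Fin d) ℂ),
      Φ (∑ n, X n) = ∑ n, Φ (X n) := by
    intro X
    simp only [hΦ, Finset.mul_sum, Finset.sum_mul]
    rw [Finset.sum_comm]
  have hΦone : Φ 1 = 1 := by rw [hΦ]; simpa using hKr'
  -- rewrite each term
  have hterm : ∀ n l, (Real.exp (β * (ν n - ν l)) : ℂ) *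
      (Pr l * V * Φ (U * Pr n * ρ₁ * Uᴴ) * Vᴴ).trace
      = Z⁻¹ * c l * (Pr l * V * Φ (U * (Pr n * Uᴴ)) * Vᴴ).trace := by
    intro n l
    have h1 : U * Pr n * ρ₁ * Uᴴ = (Z⁻¹ * c n) • (U * (Pr n * Uᴴ)) := by
      rw [Matrix.mul_assoc U (Pr n) ρ₁, hPrρ]
      simp [Matrix.mul_smul, Matrix.smul_mul, Matrix.mul_assoc]
    have hcoef : (Real.exp (β * (ν n - ν l)) : ℂ) * (Z⁻¹ * c n) = Z⁻¹ * c l := by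
      rw [hc]
      have hre : Real.exp (β * (ν n - ν l)) * Real.exp (-(β * ν n))
          = Real.exp (-(β * ν l)) := by
        rw [← Real.exp_add]; ring_nf
      push_cast [← hre]
      ring
    rw [h1, hΦsmul]
    simp only [Matrix.mul_smul, Matrix.smul_mul, Matrix.trace_smul, smul_eq_mul]
    linear_combination (Pr l * V * Φ (U * (Pr n * Uᴴ)) * Vᴴ).trace * hcoef
  calc ∑ n, ∑ l, (Real.exp (β * (ν n - ν l)) : ℂ) *
        (Pr l * V * Φ (U * Pr n * ρ₁ * Uᴴ) * Vᴴ).trace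
      = ∑ n, ∑ l, Z⁻¹ * c l * (Pr l * V * Φ (U * (Pr n * Uᴴ)) * Vᴴ).trace := by
        exact Finset.sum_congr rfl fun n _ => Finset.sum_congr rfl fun l _ => hterm n l
    _ = ∑ l, Z⁻¹ * c l * (Pr l * V * (∑ n, Φ (U * (Pr n * Uᴴ))) * Vᴴ).trace := by
        rw [Finset.sum_comm]
        refine Finset.sum_congr rfl fun l _ => ?_
        rw [← Finset.mul_sum]
        congr 1
        have hM : Pr l * V * (∑ n, Φ (U * (Pr n * Uᴴ))) * Vᴴ
            = ∑ n, Pr l * V * Φ (U * (Pr n * Uᴴ)) * Vᴴ := by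
          rw [Finset.mul_sum, Finset.sum_mul]
        rw [hM, Matrix.trace_sum]
    _ = ∑ l, Z⁻¹ * c l := by
        refine Finset.sum_congr rfl fun l _ => ?_
        have : ∑ n, Φ (U * (Pr n * Uᴴ)) = 1 := by
          rw [← hΦsum]
          have : ∑ n, U * (Pr n * Uᴴ) = 1 := by
            rw [← Finset.mul_sum, ← Finset.sum_mul, hPrsum, one_mul, hU']
          rw [this, hΦone]
        rw [this, Matrix.mul_one]
        rw [Matrix.mul_assoc, hV', Matrix.mul_one, hPrtr, mul_one]
    _ = 1 := by rw [← Finset.mul_sum, ← hZval, inv_mul_cancel₀ hZne]
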